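/- (Lemma 6, type C.) Let n ≥ 2, let e_1, …, e_n be the standard basis of ℤ^n, let Δ_+ = { e_a − e_b : 1 ≤ a < b ≤ n } ∪ { e_a + e_b : 1 ≤ a < b ≤ n } ∪ { 2e_a : 1 ≤ a ≤ n }, let the simple roots be α_a = e_a − e_{a+1} for 1 ≤ a ≤ n−1 together with α_n = 2e_n, and let α_max = 2e_1. Then there do not exist ξ, ζ ∈ Δ_+, a nonempty set S of simple roots, and positive integers (m_s)_{s∈S} such that α_max = ξ + ζ + Σ_{s∈S} m_s·s, ξ + ζ ∉ Δ_+, and for every s ∈ S both ξ + s ∉ Δ_+ and ζ + s ∉ Δ_+. -/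

import Mathlib

/-- The standard basis vector `e_a` of `ℤ^n`. -/
def stdBasis (n : ℕ) (a : Fin n) : Fin n → ℤ := Pi.single a 1

/-- The positive roots of type `C_n` realized in `ℤ^n`:
`Δ_+ = { e_a − e_b, e_a + e_b : a < b } ∪ { 2e_a }`. -/
def posRootsC (n : ℕ) : Set (Fin n → ℤ) :=
  {v | (∃ a b : Fin n, a < b ∧
          (v = stdBasis n a - stdBasis n b ∨ v = stdBasis n a + stdBasis n b)) ∨
        ∃ a : Fin n, v = (2 : ℤ) • stdBasis n a}

/-- The simple roots of type `C_n`: `α_a = e_a − e_{a+1}` for `a < n`, and `α_n = 2e_n`. -/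
def simpleRootsC (n : ℕ) (hn : 2 ≤ n) : Set (Fin n → ℤ) :=
  {v | (∃ a b : Fin n, (b : ℕ) = (a : ℕ) + 1 ∧ v = stdBasis n a - stdBasis n b) ∨
        v = (2 : ℤ) • stdBasis n ⟨n - 1, by omega⟩}

namespace AuxC

variable {n : ℕ}

lemma stdBasis_apply (a i : Fin n) : stdBasis n a i = if i = a then 1 else 0 := by
  simp [stdBasis, Pi.single_apply]

/-- the partial sum functional -/
def F (n : ℕ) (j : Fin n) (v : Fin n → ℤ) : ℤ :=
  ∑ i ∈ Finset.univ.filter (fun i => i ≤ j), v i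

lemma F_add (j : Fin n) (x y : Fin n → ℤ) : F n j (x + y) = F n j x + F n j y := by
  simpa [F] using Finset.sum_add_distrib

lemma F_sub (j : Fin n) (x y : Fin n → ℤ) : F n j (x - y) = F n j x - F n j y := by
  simpa [F] using Finset.sum_sub_distrib

lemma F_smul (j : Fin n) (c : ℤ) (x : Fin n → ℤ) : F n j (c • x) = c * F n j x := by
  simp [F, Finset.mul_sum]

lemma F_sum (j : Fin n) (S : Finset (Fin n → ℤ)) (f : (Fin n → ℤ) → (Fin n → ℤ)) :
    F n j (∑ s ∈ S, f s) = ∑ s ∈ S, F n j (f s) := by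
  simp only [F, Finset.sum_apply]
  exact Finset.sum_comm

lemma F_e (j a : Fin n) : F n j (stdBasis n a) = if a ≤ j then 1 else 0 := by
  have : ∀ i : Fin n, stdBasis n a i = if i = a then (1:ℤ) else 0 := stdBasis_apply a
  simp only [F]
  rw [Finset.sum_congr rfl (fun i _ => this i), Finset.sum_ite_eq' _ a (fun _ => (1:ℤ))]
  simp



lemma ne_of_apply {v w : Fin n → ℤ} (i : Fin n) (h : v i ≠ w i) : v ≠ w :=
  fun hvw => h (congrFun hvw i)

lemma sumS (hn : 2 ≤ n) (S : Finset (Fin n → ℤ)) (m : (Fin n → ℤ) → ℕ)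
    (hS : (↑S : Set (Fin n → ℤ)) ⊆ simpleRootsC n hn) (j j1 : Fin n)
    (hj1 : (j1 : ℕ) = (j : ℕ) + 1) :
    ∑ s ∈ S, (m s : ℤ) * F n j s =
      (if stdBasis n j - stdBasis n j1 ∈ S
        then (m (stdBasis n j - stdBasis n j1) : ℤ) else 0) := by
  rw [← Finset.sum_ite_eq' S _ (fun s => (m s : ℤ))]
  apply Finset.sum_congr rfl
  intro s hs
  have hsim := hS hs
  simp only [simpleRootsC, Set.mem_setOf_eq] at hsim
  rcases hsim with ⟨a, b, hba, rfl⟩ | rfl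
  · rw [F_sub, F_e, F_e]
    by_cases hja : a = j
    · subst hja
      have hbj1 : b = j1 := Fin.ext (by omega)
      subst hbj1
      rw [if_pos (le_refl a), if_neg (by rw [Fin.le_def]; omega), if_pos rfl]
      ring
    · have hne : stdBasis n a - stdBasis n b ≠ stdBasis n j - stdBasis n j1 := by
        apply ne_of_apply a
        rw [Pi.sub_apply, Pi.sub_apply, stdBasis_apply, stdBasis_apply,
          stdBasis_apply, stdBasis_apply]
        have hab : a ≠ b := fun h => by rw [h] at hba; omega
        rw [if_pos rfl, if_neg hab, if_neg hja]
        split_ifs with h <;> omega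
      rw [if_neg hne]
      have hval : ((if a ≤ j then (1:ℤ) else 0) - if b ≤ j then 1 else 0) = 0 := by
        have h2 : ¬ ((a:ℕ) = (j:ℕ)) := fun h => hja (Fin.ext h)
        simp only [Fin.le_def]
        split_ifs with u v v <;> omega
      rw [hval, mul_zero]
  · have hne : (2:ℤ) • stdBasis n ⟨n-1, by omega⟩ ≠ stdBasis n j - stdBasis n j1 := by
      apply ne_of_apply j1
      rw [Pi.smul_apply, Pi.sub_apply, stdBasis_apply, stdBasis_apply, stdBasis_apply]
      have hj1j : j1 ≠ j := by
        intro h; rw [Fin.ext_iff] at h; omega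
      rw [if_neg hj1j, if_pos rfl]
      split_ifs with h <;> norm_num
    rw [if_neg hne, F_smul, F_e]
    have hlast : ¬ ((⟨n-1, by omega⟩ : Fin n) ≤ j) := by
      rw [Fin.le_def]
      have := j1.isLt
      simp only
      omega
    rw [if_neg hlast]
    ring

lemma sumLast (hn : 2 ≤ n) (S : Finset (Fin n → ℤ)) (m : (Fin n → ℤ) → ℕ)
    (hS : (↑S : Set (Fin n → ℤ)) ⊆ simpleRootsC n hn) :
    ∑ s ∈ S, (m s : ℤ) * F n ⟨n-1, by omega⟩ s =
      (if (2:ℤ) • stdBasis n ⟨n-1, by omega⟩ ∈ S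
        then 2 * (m ((2:ℤ) • stdBasis n ⟨n-1, by omega⟩) : ℤ) else 0) := by
  rw [← Finset.sum_ite_eq' S _ (fun s => 2 * (m s : ℤ))]
  apply Finset.sum_congr rfl
  intro s hs
  have hsim := hS hs
  simp only [simpleRootsC, Set.mem_setOf_eq] at hsim
  rcases hsim with ⟨a, b, hba, rfl⟩ | rfl
  · have hne : stdBasis n a - stdBasis n b ≠ (2:ℤ) • stdBasis n ⟨n-1, by omega⟩ := by
      apply ne_of_apply b
      rw [Pi.sub_apply, Pi.smul_apply, stdBasis_apply, stdBasis_apply, stdBasis_apply]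
      have hab : b ≠ a := fun h => by rw [h] at hba; omega
      rw [if_neg hab, if_pos rfl]
      split_ifs with h <;> norm_num
    rw [if_neg hne, F_sub, F_e, F_e]
    have ha : a ≤ (⟨n-1, by omega⟩ : Fin n) := by
      rw [Fin.le_def]; have := a.isLt; simp only; omega
    have hb : b ≤ (⟨n-1, by omega⟩ : Fin n) := by
      rw [Fin.le_def]; have := b.isLt; simp only; omega
    rw [if_pos ha, if_pos hb]
    ring
  · rw [F_smul, F_e, if_pos (le_refl _), if_pos rfl]
    ring



lemma le_last (hn : 2 ≤ n) (a : Fin n) : a ≤ ⟨n-1, by omega⟩ := by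
  rw [Fin.le_def]
  have := a.isLt
  simp only
  omega

lemma keyF (hn : 2 ≤ n) (ξ ζ : Fin n → ℤ) (S : Finset (Fin n → ℤ)) (m : (Fin n → ℤ) → ℕ)
    (hS : (↑S : Set (Fin n → ℤ)) ⊆ simpleRootsC n hn)
    (heq : (2 : ℤ) • stdBasis n ⟨0, Nat.zero_lt_of_lt hn⟩ = ξ + ζ + ∑ s ∈ S, (m s : ℤ) • s)
    (j j1 : Fin n) (hj1 : (j1:ℕ) = (j:ℕ) + 1) :
    (2:ℤ) = F n j ξ + F n j ζ +
      (if stdBasis n j - stdBasis n j1 ∈ S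
        then (m (stdBasis n j - stdBasis n j1) : ℤ) else 0) := by
  have h := congrArg (F n j) heq
  rw [F_add, F_add, F_sum] at h
  rw [Finset.sum_congr rfl (fun s _ => F_smul j ((m s : ℤ)) s)] at h
  rw [sumS hn S m hS j j1 hj1] at h
  rw [F_smul, F_e, if_pos (by simp [Fin.le_def] : (⟨0, Nat.zero_lt_of_lt hn⟩ : Fin n) ≤ j)] at h
  linarith

lemma keyLast (hn : 2 ≤ n) (ξ ζ : Fin n → ℤ) (S : Finset (Fin n → ℤ)) (m : (Fin n → ℤ) → ℕ)
    (hS : (↑S : Set (Fin n → ℤ)) ⊆ simpleRootsC n hn)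
    (heq : (2 : ℤ) • stdBasis n ⟨0, Nat.zero_lt_of_lt hn⟩ = ξ + ζ + ∑ s ∈ S, (m s : ℤ) • s) :
    (2:ℤ) = F n ⟨n-1, by omega⟩ ξ + F n ⟨n-1, by omega⟩ ζ +
      (if (2:ℤ) • stdBasis n ⟨n-1, by omega⟩ ∈ S
        then 2 * (m ((2:ℤ) • stdBasis n ⟨n-1, by omega⟩) : ℤ) else 0) := by
  have h := congrArg (F n ⟨n-1, by omega⟩) heq
  rw [F_add, F_add, F_sum] at h
  rw [Finset.sum_congr rfl (fun s _ => F_smul _ ((m s : ℤ)) s)] at h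
  rw [sumLast hn S m hS] at h
  rw [F_smul, F_e, if_pos (le_last hn _)] at h
  linarith

lemma mem_diff (a c : Fin n) (h : a < c) : stdBasis n a - stdBasis n c ∈ posRootsC n :=
  Or.inl ⟨a, c, h, Or.inl rfl⟩

lemma mem_plus (a c : Fin n) (h : a < c) : stdBasis n a + stdBasis n c ∈ posRootsC n :=
  Or.inl ⟨a, c, h, Or.inr rfl⟩

lemma mem_two (a : Fin n) : (2:ℤ) • stdBasis n a ∈ posRootsC n :=
  Or.inr ⟨a, rfl⟩


set_option maxHeartbeats 1000000 in
lemma main_diff (hn : 2 ≤ n) (ξ ζ : Fin n → ℤ) (S : Finset (Fin n → ℤ))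
    (m : (Fin n → ℤ) → ℕ) (a b : Fin n) (hab : a < b)
    (hξ : ξ = stdBasis n a - stdBasis n b)
    (hζ : ζ ∈ posRootsC n) (hSne : S.Nonempty)
    (hS : (↑S : Set (Fin n → ℤ)) ⊆ simpleRootsC n hn)
    (hm1 : ∀ s ∈ S, 1 ≤ m s)
    (heq : (2 : ℤ) • stdBasis n ⟨0, Nat.zero_lt_of_lt hn⟩ = ξ + ζ + ∑ s ∈ S, (m s : ℤ) • s)
    (hall : ∀ s ∈ S, ξ + s ∉ posRootsC n ∧ ζ + s ∉ posRootsC n) : False := by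
  rw [Fin.lt_def] at hab
  have hia := a.isLt
  have hib := b.isLt
  have hL := keyLast hn ξ ζ S m hS heq
  rcases hζ with ⟨c, d, hcd, hζ2 | hζ2⟩ | ⟨c, hζ2⟩
  -- Case 1 : ζ = e c - e d
  · rw [Fin.lt_def] at hcd
    have hic := c.isLt
    have hid' := d.isLt
    -- 2 e_last ∈ S
    by_cases hB : (2:ℤ) • stdBasis n ⟨n-1, by omega⟩ ∈ S
    swap
    · rw [if_neg hB, hξ, hζ2] at hL
      simp only [F_sub, F_e] at hL
      simp only [Fin.le_def, Fin.val_mk] at hL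
      split_ifs at hL <;> omega
    -- b ≠ last
    have hbval : (b:ℕ) < n - 1 := by
      rcases Nat.lt_or_ge (b:ℕ) (n-1) with h | h
      · exact h
      exfalso
      have hb : b = ⟨n-1, by omega⟩ := Fin.ext (by simp only [Fin.val_mk]; omega)
      apply (hall _ hB).1
      have hid : ξ + (2:ℤ) • stdBasis n ⟨n-1, by omega⟩
          = stdBasis n a + stdBasis n b := by
        rw [hξ, ← hb]; module
      rw [hid]
      exact mem_plus a b (by rw [Fin.lt_def]; omega)
    -- key at j = b
    have hk := keyF hn ξ ζ S m hS heq b ⟨(b:ℕ)+1, by omega⟩ rfl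
    have hnotin : stdBasis n b - stdBasis n ⟨(b:ℕ)+1, by omega⟩ ∉ S := by
      intro hin
      apply (hall _ hin).1
      have hid : ξ + (stdBasis n b - stdBasis n ⟨(b:ℕ)+1, by omega⟩)
          = stdBasis n a - stdBasis n ⟨(b:ℕ)+1, by omega⟩ := by
        rw [hξ]; abel
      rw [hid]
      exact mem_diff a _ (by simp only [Fin.lt_def, Fin.val_mk]; omega)
    rw [if_neg hnotin, hξ, hζ2] at hk
    simp only [F_sub, F_e] at hk
    simp only [Fin.le_def, Fin.val_mk] at hk
    split_ifs at hk <;> omega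
  -- Case 2 : ζ = e c + e d
  · rw [Fin.lt_def] at hcd
    have hic := c.isLt
    have hid' := d.isLt
    have hB : (2:ℤ) • stdBasis n ⟨n-1, by omega⟩ ∉ S := by
      intro hB
      have hmB := hm1 _ hB
      rw [if_pos hB, hξ, hζ2] at hL
      simp only [F_sub, F_add, F_e] at hL
      simp only [Fin.le_def, Fin.val_mk] at hL
      split_ifs at hL <;> omega
    -- Step A : c = 0
    have hc0 : (c:ℕ) = 0 := by
      by_contra hc
      have hk := keyF hn ξ ζ S m hS heq ⟨(c:ℕ)-1, by omega⟩ c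
        (by simp only [Fin.val_mk]; omega)
      have hnotin : stdBasis n ⟨(c:ℕ)-1, by omega⟩ - stdBasis n c ∉ S := by
        intro hin
        apply (hall _ hin).2
        have hid : ζ + (stdBasis n ⟨(c:ℕ)-1, by omega⟩ - stdBasis n c)
            = stdBasis n ⟨(c:ℕ)-1, by omega⟩ + stdBasis n d := by
          rw [hζ2]; abel
        rw [hid]
        exact mem_plus _ d (by simp only [Fin.lt_def, Fin.val_mk]; omega)
      rw [if_neg hnotin, hξ, hζ2] at hk
      simp only [F_sub, F_add, F_e] at hk
      simp only [Fin.le_def, Fin.val_mk] at hk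
      split_ifs at hk <;> omega
    -- facts about elements of S
    have hfact : ∀ k k1 : Fin n, (k1:ℕ) = (k:ℕ)+1 →
        stdBasis n k - stdBasis n k1 ∈ S →
        (k:ℕ) ≠ (b:ℕ) ∧ (k:ℕ)+1 ≠ (a:ℕ) ∧ (k:ℕ)+1 ≠ (d:ℕ) := by
      intro k k1 hk1 hkS
      refine ⟨?_, ?_, ?_⟩
      · intro hkb
        apply (hall _ hkS).1
        have hbk : b = k := Fin.ext hkb.symm
        have hid : ξ + (stdBasis n k - stdBasis n k1)
            = stdBasis n a - stdBasis n k1 := by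
          rw [hξ, hbk]; abel
        rw [hid]
        exact mem_diff a k1 (by rw [Fin.lt_def]; omega)
      · intro hk1a
        apply (hall _ hkS).1
        have hak1 : a = k1 := Fin.ext (by omega)
        have hid : ξ + (stdBasis n k - stdBasis n k1)
            = stdBasis n k - stdBasis n b := by
          rw [hξ, hak1]; abel
        rw [hid]
        exact mem_diff k b (by rw [Fin.lt_def]; omega)
      · intro hk1d
        apply (hall _ hkS).2
        have hdk1 : d = k1 := Fin.ext (by omega)
        have hid : ζ + (stdBasis n k - stdBasis n k1)
            = stdBasis n c + stdBasis n k := by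
          rw [hζ2, hdk1]; abel
        rw [hid]
        rcases Nat.eq_or_lt_of_le (Nat.zero_le (k:ℕ)) with hck | hck
        · have hck2 : c = k := Fin.ext (by omega)
          rw [hck2]
          have hid2 : stdBasis n k + stdBasis n k = (2:ℤ) • stdBasis n k := by
            module
          rw [hid2]
          exact mem_two k
        · exact mem_plus c k (by rw [Fin.lt_def]; omega)
    -- Step B : a < d ≤ b
    have hd1 : 1 ≤ (d:ℕ) := by omega
    have hadb : (a:ℕ) < (d:ℕ) ∧ (d:ℕ) ≤ (b:ℕ) := by
      have hk := keyF hn ξ ζ S m hS heq ⟨(d:ℕ)-1, by omega⟩ d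
        (by simp only [Fin.val_mk]; omega)
      have hnotin : stdBasis n ⟨(d:ℕ)-1, by omega⟩ - stdBasis n d ∉ S := by
        intro hin
        exact (hfact _ d (by simp only [Fin.val_mk]; omega) hin).2.2
          (by simp only [Fin.val_mk]; omega)
      rw [if_neg hnotin, hξ, hζ2] at hk
      simp only [F_sub, F_add, F_e] at hk
      simp only [Fin.le_def, Fin.val_mk] at hk
      split_ifs at hk <;> omega
    -- Step C : elements of S force a ≥ 2
    obtain ⟨s0, hs0⟩ := hSne
    have hsim := hS hs0
    simp only [simpleRootsC, Set.mem_setOf_eq] at hsim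
    rcases hsim with ⟨k, k1, hk1, hs0eq⟩ | hs0eq
    swap
    · rw [hs0eq] at hs0; exact hB hs0
    rw [hs0eq] at hs0
    have hf := hfact k k1 hk1 hs0
    have hka : (k:ℕ)+1 < (a:ℕ) := by
      have hk' := keyF hn ξ ζ S m hS heq k k1 hk1
      have hmk := hm1 _ hs0
      rw [if_pos hs0, hξ, hζ2] at hk'
      simp only [F_sub, F_add, F_e] at hk'
      simp only [Fin.le_def, Fin.val_mk] at hk'
      split_ifs at hk' <;> omega
    -- Step D : contradiction at j = a-1
    have hk2 := keyF hn ξ ζ S m hS heq ⟨(a:ℕ)-1, by omega⟩ a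
      (by simp only [Fin.val_mk]; omega)
    have hnotin : stdBasis n ⟨(a:ℕ)-1, by omega⟩ - stdBasis n a ∉ S := by
      intro hin
      exact (hfact _ a (by simp only [Fin.val_mk]; omega) hin).2.1
        (by simp only [Fin.val_mk]; omega)
    rw [if_neg hnotin, hξ, hζ2] at hk2
    simp only [F_sub, F_add, F_e] at hk2
    simp only [Fin.le_def, Fin.val_mk] at hk2
    split_ifs at hk2 <;> omega
  -- Case 3 : ζ = 2 e c
  · have hic := c.isLt
    have hB : (2:ℤ) • stdBasis n ⟨n-1, by omega⟩ ∉ S := by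
      intro hB
      have hmB := hm1 _ hB
      rw [if_pos hB, hξ, hζ2] at hL
      simp only [F_sub, F_smul, F_e] at hL
      simp only [Fin.le_def, Fin.val_mk] at hL
      split_ifs at hL <;> omega
    obtain ⟨s0, hs0⟩ := hSne
    have hsim := hS hs0
    simp only [simpleRootsC, Set.mem_setOf_eq] at hsim
    rcases hsim with ⟨k, k1, hk1, hs0eq⟩ | hs0eq
    swap
    · rw [hs0eq] at hs0; exact hB hs0
    rw [hs0eq] at hs0
    have hkc : (k:ℕ) < (c:ℕ) := by
      have hk' := keyF hn ξ ζ S m hS heq k k1 hk1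
      have hmk := hm1 _ hs0
      rw [if_pos hs0, hξ, hζ2] at hk'
      simp only [F_sub, F_smul, F_e] at hk'
      simp only [Fin.le_def, Fin.val_mk] at hk'
      split_ifs at hk' <;> omega
    -- contradiction at j = c-1
    have hk2 := keyF hn ξ ζ S m hS heq ⟨(c:ℕ)-1, by omega⟩ c
      (by simp only [Fin.val_mk]; omega)
    have hnotin : stdBasis n ⟨(c:ℕ)-1, by omega⟩ - stdBasis n c ∉ S := by
      intro hin
      apply (hall _ hin).2
      have hid : ζ + (stdBasis n ⟨(c:ℕ)-1, by omega⟩ - stdBasis n c)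
          = stdBasis n ⟨(c:ℕ)-1, by omega⟩ + stdBasis n c := by
        rw [hζ2]; module
      rw [hid]
      exact mem_plus _ c (by simp only [Fin.lt_def, Fin.val_mk]; omega)
    rw [if_neg hnotin, hξ, hζ2] at hk2
    simp only [F_sub, F_smul, F_e] at hk2
    simp only [Fin.le_def, Fin.val_mk] at hk2
    split_ifs at hk2 <;> omega

set_option maxHeartbeats 1000000 in
lemma main_heavy (hn : 2 ≤ n) (ξ ζ : Fin n → ℤ) (S : Finset (Fin n → ℤ))
    (m : (Fin n → ℤ) → ℕ)
    (hS : (↑S : Set (Fin n → ℤ)) ⊆ simpleRootsC n hn)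
    (hm1 : ∀ s ∈ S, 1 ≤ m s)
    (heq : (2 : ℤ) • stdBasis n ⟨0, Nat.zero_lt_of_lt hn⟩ = ξ + ζ + ∑ s ∈ S, (m s : ℤ) • s)
    (hξh : (∃ a b : Fin n, ξ = stdBasis n a + stdBasis n b) ∨
            ∃ a : Fin n, ξ = (2:ℤ) • stdBasis n a)
    (hζh : (∃ a b : Fin n, ζ = stdBasis n a + stdBasis n b) ∨
            ∃ a : Fin n, ζ = (2:ℤ) • stdBasis n a) : False := by
  have hL := keyLast hn ξ ζ S m hS heq
  rcases hξh with ⟨a, b, hξ2⟩ | ⟨a, hξ2⟩ <;>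
    rcases hζh with ⟨c, d, hζ2⟩ | ⟨c, hζ2⟩
  · have h1 := a.isLt; have h2 := b.isLt; have h3 := c.isLt; have h4 := d.isLt
    rw [hξ2, hζ2] at hL
    simp only [F_add, F_smul, F_e] at hL
    simp only [Fin.le_def, Fin.val_mk] at hL
    split_ifs at hL <;> omega
  · have h1 := a.isLt; have h2 := b.isLt; have h3 := c.isLt
    rw [hξ2, hζ2] at hL
    simp only [F_add, F_smul, F_e] at hL
    simp only [Fin.le_def, Fin.val_mk] at hL
    split_ifs at hL <;> omega
  · have h1 := a.isLt; have h3 := c.isLt; have h4 := d.isLt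
    rw [hξ2, hζ2] at hL
    simp only [F_add, F_smul, F_e] at hL
    simp only [Fin.le_def, Fin.val_mk] at hL
    split_ifs at hL <;> omega
  · have h1 := a.isLt; have h3 := c.isLt
    rw [hξ2, hζ2] at hL
    simp only [F_add, F_smul, F_e] at hL
    simp only [Fin.le_def, Fin.val_mk] at hL
    split_ifs at hL <;> omega

end AuxC

set_option maxHeartbeats 1000000 in
/-- **Lemma 6, type C.** There is no decomposition
`α_max = ξ + ζ + Σ_{s∈S} m_s·s` with `ξ, ζ ∈ Δ_+`, `S` a nonempty set of simple roots,
`m_s ≥ 1`, such that `ξ + ζ ∉ Δ_+` and `ξ + s ∉ Δ_+`, `ζ + s ∉ Δ_+` for all `s ∈ S`.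
Here `α_max = 2e_1`. -/
theorem no_decomposition_typeC (n : ℕ) (hn : 2 ≤ n) :
    ¬ ∃ (ξ ζ : Fin n → ℤ) (S : Finset (Fin n → ℤ)) (m : (Fin n → ℤ) → ℕ),
        ξ ∈ posRootsC n ∧ ζ ∈ posRootsC n ∧
        S.Nonempty ∧ (↑S : Set (Fin n → ℤ)) ⊆ simpleRootsC n hn ∧ (∀ s ∈ S, 1 ≤ m s) ∧
        (2 : ℤ) • stdBasis n ⟨0, by omega⟩ =
          ξ + ζ + ∑ s ∈ S, (m s : ℤ) • s ∧
        ξ + ζ ∉ posRootsC n ∧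
        ∀ s ∈ S, ξ + s ∉ posRootsC n ∧ ζ + s ∉ posRootsC n := by
  rintro ⟨ξ, ζ, S, m, hξ, hζ, hSne, hSsub, hm1, heq, hsum, hall⟩
  rcases hξ with ⟨a, b, hab, hξ2 | hξ2⟩ | ⟨a, hξ2⟩
  · exact AuxC.main_diff hn ξ ζ S m a b hab hξ2 hζ hSne hSsub hm1 heq hall
  · -- ξ = e a + e b
    rcases hζ with ⟨c, d, hcd, hζ2 | hζ2⟩ | ⟨c, hζ2⟩
    · refine AuxC.main_diff hn ζ ξ S m c d hcd hζ2
        (Or.inl ⟨a, b, hab, Or.inr hξ2⟩) hSne hSsub hm1 ?_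
        (fun s hs => ⟨(hall s hs).2, (hall s hs).1⟩)
      rw [show ζ + ξ = ξ + ζ from add_comm ζ ξ]
      exact heq
    · exact AuxC.main_heavy hn ξ ζ S m hSsub hm1 heq
        (Or.inl ⟨a, b, hξ2⟩) (Or.inl ⟨c, d, hζ2⟩)
    · exact AuxC.main_heavy hn ξ ζ S m hSsub hm1 heq
        (Or.inl ⟨a, b, hξ2⟩) (Or.inr ⟨c, hζ2⟩)
  · -- ξ = 2 e a
    rcases hζ with ⟨c, d, hcd, hζ2 | hζ2⟩ | ⟨c, hζ2⟩
    · refine AuxC.main_diff hn ζ ξ S m c d hcd hζ2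
        (Or.inr ⟨a, hξ2⟩) hSne hSsub hm1 ?_
        (fun s hs => ⟨(hall s hs).2, (hall s hs).1⟩)
      rw [show ζ + ξ = ξ + ζ from add_comm ζ ξ]
      exact heq
    · exact AuxC.main_heavy hn ξ ζ S m hSsub hm1 heq
        (Or.inr ⟨a, hξ2⟩) (Or.inl ⟨c, d, hζ2⟩)
    · exact AuxC.main_heavy hn ξ ζ S m hSsub hm1 heq
        (Or.inr ⟨a, hξ2⟩) (Or.inr ⟨c, hζ2⟩)
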